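/- arXiv:1409.8621 — 2 statements merged into one kernel-verified Lean document; each statement's English description precedes it below -/
import Mathlib

section
/- Let (F_n) be a sequence of probability measures on R^2 with continuous margins converging weakly to a probability measure F_0 with continuous margins. Then the copulas C_n = T(F_n) converge to C_0 = T(F_0) uniformly on [0,1]^2. -/
open MeasureTheory ProbabilityTheory Set Filter

noncomputable section

/-- First marginal of a measure on `ℝ × ℝ`. -/
def margFst (μ : Measure (ℝ × ℝ)) : Measure ℝ := μ.map Prod.fst

/-- Second marginal of a measure on `ℝ × ℝ`. -/
def margSnd (μ : Measure (ℝ × ℝ)) : Measure ℝ := μ.map Prod.snd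

/-- Both margins are continuous (atomless) distributions. -/
def ContinuousMargins (μ : Measure (ℝ × ℝ)) : Prop :=
  ∀ x : ℝ, margFst μ {x} = 0 ∧ margSnd μ {x} = 0

/-- Convolution of two measures on `ℝ × ℝ`. -/
def mconv (μ ν : Measure (ℝ × ℝ)) : Measure (ℝ × ℝ) :=
  (μ.prod ν).map (fun p => p.1 + p.2)

/-- A two-dimensional copula: grounded, uniform margins, and 2-increasing on `[0,1]²`. -/
def IsCopula (C : ℝ → ℝ → ℝ) : Prop :=
  (∀ u ∈ Icc (0:ℝ) 1, C u 0 = 0 ∧ C 0 u = 0 ∧ C u 1 = u ∧ C 1 u = u) ∧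
  (∀ u₁ u₂ v₁ v₂ : ℝ, u₁ ∈ Icc (0:ℝ) 1 → u₂ ∈ Icc (0:ℝ) 1 → v₁ ∈ Icc (0:ℝ) 1 →
    v₂ ∈ Icc (0:ℝ) 1 → u₁ ≤ u₂ → v₁ ≤ v₂ →
    0 ≤ C u₂ v₂ - C u₂ v₁ - C u₁ v₂ + C u₁ v₁)

/-- Joint cumulative distribution function of a measure on `ℝ × ℝ`. -/
def cdf2 (μ : Measure (ℝ × ℝ)) (x y : ℝ) : ℝ := (μ (Iic x ×ˢ Iic y)).toReal

/-- `C` is the copula of `μ` (Sklar relation). -/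
def IsCopulaOf (C : ℝ → ℝ → ℝ) (μ : Measure (ℝ × ℝ)) : Prop :=
  IsCopula C ∧ ∀ x y : ℝ, cdf2 μ x y = C (cdf (margFst μ) x) (cdf (margSnd μ) y)

/-! ### Auxiliary lemmas -/

lemma copula_lip1 {C : ℝ → ℝ → ℝ} (hc : IsCopula C) {u₁ u₂ v : ℝ}
    (h1 : u₁ ∈ Icc (0:ℝ) 1) (h2 : u₂ ∈ Icc (0:ℝ) 1) (hv : v ∈ Icc (0:ℝ) 1) :
    |C u₂ v - C u₁ v| ≤ |u₂ - u₁| := by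
  have key : ∀ a b : ℝ, a ∈ Icc (0:ℝ) 1 → b ∈ Icc (0:ℝ) 1 → a ≤ b →
      C a v ≤ C b v ∧ C b v - C a v ≤ b - a := by
    intro a b ha hb hab
    have h01 : (0:ℝ) ∈ Icc (0:ℝ) 1 := ⟨le_refl 0, zero_le_one⟩
    have h11 : (1:ℝ) ∈ Icc (0:ℝ) 1 := ⟨zero_le_one, le_refl 1⟩
    have A := hc.2 a b 0 v ha hb h01 hv hab hv.1
    have B := hc.2 a b v 1 ha hb hv h11 hab hv.2
    have ha0 : C a 0 = 0 := (hc.1 a ha).1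
    have hb0 : C b 0 = 0 := (hc.1 b hb).1
    have ha1 : C a 1 = a := (hc.1 a ha).2.2.1
    have hb1 : C b 1 = b := (hc.1 b hb).2.2.1
    rw [ha0, hb0] at A
    rw [ha1, hb1] at B
    constructor <;> linarith
  rcases le_total u₁ u₂ with h | h
  · obtain ⟨m, l⟩ := key u₁ u₂ h1 h2 h
    rw [abs_of_nonneg (by linarith), abs_of_nonneg (by linarith)]
    linarith
  · obtain ⟨m, l⟩ := key u₂ u₁ h2 h1 h
    rw [abs_of_nonpos (by linarith), abs_of_nonpos (by linarith)]
    linarith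

lemma copula_lip2 {C : ℝ → ℝ → ℝ} (hc : IsCopula C) {u v₁ v₂ : ℝ}
    (hu : u ∈ Icc (0:ℝ) 1) (h1 : v₁ ∈ Icc (0:ℝ) 1) (h2 : v₂ ∈ Icc (0:ℝ) 1) :
    |C u v₂ - C u v₁| ≤ |v₂ - v₁| := by
  have key : ∀ a b : ℝ, a ∈ Icc (0:ℝ) 1 → b ∈ Icc (0:ℝ) 1 → a ≤ b →
      C u a ≤ C u b ∧ C u b - C u a ≤ b - a := by
    intro a b ha hb hab
    have h01 : (0:ℝ) ∈ Icc (0:ℝ) 1 := ⟨le_refl 0, zero_le_one⟩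
    have h11 : (1:ℝ) ∈ Icc (0:ℝ) 1 := ⟨zero_le_one, le_refl 1⟩
    have A := hc.2 0 u a b h01 hu ha hb hu.1 hab
    have B := hc.2 u 1 a b hu h11 ha hb hu.2 hab
    have ha0 : C 0 a = 0 := (hc.1 a ha).2.1
    have hb0 : C 0 b = 0 := (hc.1 b hb).2.1
    have ha1 : C 1 a = a := (hc.1 a ha).2.2.2
    have hb1 : C 1 b = b := (hc.1 b hb).2.2.2
    rw [ha0, hb0] at A
    rw [ha1, hb1] at B
    constructor <;> linarith
  rcases le_total v₁ v₂ with h | h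
  · obtain ⟨m, l⟩ := key v₁ v₂ h1 h2 h
    rw [abs_of_nonneg (by linarith), abs_of_nonneg (by linarith)]
    linarith
  · obtain ⟨m, l⟩ := key v₂ v₁ h2 h1 h
    rw [abs_of_nonpos (by linarith), abs_of_nonpos (by linarith)]
    linarith

lemma copula_lip {C : ℝ → ℝ → ℝ} (hc : IsCopula C) {u₁ u₂ v₁ v₂ : ℝ}
    (h1 : u₁ ∈ Icc (0:ℝ) 1) (h2 : u₂ ∈ Icc (0:ℝ) 1) (h3 : v₁ ∈ Icc (0:ℝ) 1)
    (h4 : v₂ ∈ Icc (0:ℝ) 1) :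
    |C u₂ v₂ - C u₁ v₁| ≤ |u₂ - u₁| + |v₂ - v₁| := by
  have a := copula_lip1 hc h1 h2 h4
  have b := copula_lip2 hc h1 h3 h4
  calc |C u₂ v₂ - C u₁ v₁| ≤ |C u₂ v₂ - C u₁ v₂| + |C u₁ v₂ - C u₁ v₁| := abs_sub_le _ _ _
    _ ≤ |u₂ - u₁| + |v₂ - v₁| := add_le_add a b

lemma cdf_continuous' (μ : Measure ℝ) [IsProbabilityMeasure μ] (h : ∀ x, μ {x} = 0) :
    Continuous (cdf μ) := by
  rw [continuous_iff_continuousAt]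
  intro x
  rw [(monotone_cdf μ).continuousAt_iff_leftLim_eq_rightLim, StieltjesFunction.rightLim_eq]
  have h1 : (cdf μ).measure {x} = 0 := by rw [measure_cdf]; exact h x
  rw [StieltjesFunction.measure_singleton] at h1
  have h2 := (monotone_cdf μ).leftLim_le (le_refl x)
  have h3 : cdf μ x - Function.leftLim (cdf μ) x ≤ 0 := by
    simpa [ENNReal.ofReal_eq_zero] using h1
  linarith

lemma cdf_surj' (μ : Measure ℝ) [IsProbabilityMeasure μ] (h : ∀ x, μ {x} = 0)
    {u : ℝ} (hu0 : 0 < u) (hu1 : u < 1) : ∃ x, cdf μ x = u := by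
  obtain ⟨a, ha⟩ := ((tendsto_cdf_atBot μ).eventually_lt_const hu0).exists
  obtain ⟨b, hb⟩ := ((tendsto_cdf_atTop μ).eventually_const_lt hu1).exists
  have hab : a ≤ b := le_of_lt <| (monotone_cdf μ).reflect_lt (ha.trans hb)
  obtain ⟨x, _, hx⟩ := intermediate_value_Icc hab (cdf_continuous' μ h).continuousOn ⟨ha.le, hb.le⟩
  exact ⟨x, hx⟩

/-- Portmanteau: weak convergence gives convergence of measures of sets with null frontier. -/
lemma weak_set_conv {Ω : Type*} [MeasurableSpace Ω] [PseudoEMetricSpace Ω]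
    [OpensMeasurableSpace Ω] [HasOuterApproxClosed Ω]
    (G : ℕ → Measure Ω) (G₀ : Measure Ω)
    [hG : ∀ n, IsProbabilityMeasure (G n)] [IsProbabilityMeasure G₀]
    (hweak : ∀ f : BoundedContinuousFunction Ω ℝ,
      Tendsto (fun n => ∫ p, f p ∂(G n)) atTop (nhds (∫ p, f p ∂G₀)))
    (E : Set Ω) (hE : G₀ (frontier E) = 0) :
    Tendsto (fun n => (G n E).toReal) atTop (nhds (G₀ E).toReal) := by
  set Pn : ℕ → ProbabilityMeasure Ω := fun n => ⟨G n, hG n⟩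
  set P0 : ProbabilityMeasure Ω := ⟨G₀, inferInstance⟩
  have hP : Tendsto Pn atTop (nhds P0) := by
    rw [ProbabilityMeasure.tendsto_iff_forall_integral_tendsto]
    exact hweak
  have key := ProbabilityMeasure.tendsto_measure_of_null_frontier_of_tendsto' hP (E := E) hE
  exact (ENNReal.tendsto_toReal (measure_ne_top G₀ E)).comp key

lemma prod_frontier_null (μ : Measure (ℝ × ℝ)) (x y : ℝ)
    (h1 : margFst μ {x} = 0) (h2 : margSnd μ {y} = 0) :
    μ (frontier (Iic x ×ˢ Iic y)) = 0 := by
  simp only [frontier_prod_eq, frontier_Iic, closure_Iic]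
  have ha : μ (Iic x ×ˢ {y}) ≤ μ (Prod.snd ⁻¹' {y}) := measure_mono (fun p hp => hp.2)
  have hb : μ ({x} ×ˢ Iic y) ≤ μ (Prod.fst ⁻¹' {x}) := measure_mono (fun p hp => hp.1)
  rw [margFst, Measure.map_apply measurable_fst (measurableSet_singleton x)] at h1
  rw [margSnd, Measure.map_apply measurable_snd (measurableSet_singleton y)] at h2
  have key := measure_union_le (μ := μ) (Iic x ×ˢ {y}) ({x} ×ˢ Iic y)
  rw [h1] at hb
  rw [h2] at ha
  have ha' : μ (Iic x ×ˢ {y}) = 0 := le_antisymm ha (zero_le)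
  have hb' : μ ({x} ×ˢ Iic y) = 0 := le_antisymm hb (zero_le)
  rw [ha', hb', add_zero] at key
  exact le_antisymm key (zero_le)

theorem stmt2 (F : ℕ → Measure (ℝ × ℝ)) (F₀ : Measure (ℝ × ℝ))
    [∀ n, IsProbabilityMeasure (F n)] [IsProbabilityMeasure F₀]
    (hmarg : ∀ n, ContinuousMargins (F n)) (hmarg₀ : ContinuousMargins F₀)
    (hweak : ∀ f : BoundedContinuousFunction (ℝ × ℝ) ℝ,
      Tendsto (fun n => ∫ p, f p ∂(F n)) atTop (nhds (∫ p, f p ∂F₀)))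
    (C : ℕ → ℝ → ℝ → ℝ) (C₀ : ℝ → ℝ → ℝ)
    (hC : ∀ n, IsCopulaOf (C n) (F n)) (hC₀ : IsCopulaOf C₀ F₀) :
    TendstoUniformlyOn (fun n (p : ℝ × ℝ) => C n p.1 p.2) (fun p : ℝ × ℝ => C₀ p.1 p.2)
      atTop (Icc (0:ℝ) 1 ×ˢ Icc (0:ℝ) 1) := by
  haveI hm1 : ∀ n, IsProbabilityMeasure (margFst (F n)) :=
    fun n => Measure.isProbabilityMeasure_map measurable_fst.aemeasurable
  haveI hm2 : ∀ n, IsProbabilityMeasure (margSnd (F n)) :=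
    fun n => Measure.isProbabilityMeasure_map measurable_snd.aemeasurable
  haveI hm10 : IsProbabilityMeasure (margFst F₀) :=
    Measure.isProbabilityMeasure_map measurable_fst.aemeasurable
  haveI hm20 : IsProbabilityMeasure (margSnd F₀) :=
    Measure.isProbabilityMeasure_map measurable_snd.aemeasurable
  -- weak convergence of the first margins
  have hweak1 : ∀ f : BoundedContinuousFunction ℝ ℝ,
      Tendsto (fun n => ∫ x, f x ∂(margFst (F n))) atTop (nhds (∫ x, f x ∂(margFst F₀))) := by
    intro f
    have hg : ∀ μ : Measure (ℝ × ℝ), ∫ x, f x ∂(margFst μ)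
        = ∫ p, (f.compContinuous ⟨Prod.fst, continuous_fst⟩) p ∂μ := by
      intro μ
      rw [margFst, integral_map measurable_fst.aemeasurable f.continuous.aestronglyMeasurable]
      rfl
    simp only [hg]
    exact hweak _
  have hweak2 : ∀ f : BoundedContinuousFunction ℝ ℝ,
      Tendsto (fun n => ∫ x, f x ∂(margSnd (F n))) atTop (nhds (∫ x, f x ∂(margSnd F₀))) := by
    intro f
    have hg : ∀ μ : Measure (ℝ × ℝ), ∫ x, f x ∂(margSnd μ)
        = ∫ p, (f.compContinuous ⟨Prod.snd, continuous_snd⟩) p ∂μ := by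
      intro μ
      rw [margSnd, integral_map measurable_snd.aemeasurable f.continuous.aestronglyMeasurable]
      rfl
    simp only [hg]
    exact hweak _
  -- convergence of marginal cdfs
  have hcdf1 : ∀ x : ℝ, Tendsto (fun n => cdf (margFst (F n)) x) atTop
      (nhds (cdf (margFst F₀) x)) := by
    intro x
    simp only [cdf_eq_real]
    exact weak_set_conv _ _ hweak1 (Iic x) (by rw [frontier_Iic]; exact (hmarg₀ x).1)
  have hcdf2 : ∀ y : ℝ, Tendsto (fun n => cdf (margSnd (F n)) y) atTop
      (nhds (cdf (margSnd F₀) y)) := by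
    intro y
    simp only [cdf_eq_real]
    exact weak_set_conv _ _ hweak2 (Iic y) (by rw [frontier_Iic]; exact (hmarg₀ y).2)
  -- convergence of joint cdfs
  have hjoint : ∀ x y : ℝ, Tendsto (fun n => cdf2 (F n) x y) atTop (nhds (cdf2 F₀ x y)) := by
    intro x y
    exact weak_set_conv _ _ hweak (Iic x ×ˢ Iic y)
      (prod_frontier_null F₀ x y (hmarg₀ x).1 (hmarg₀ y).2)
  -- pointwise convergence of the copulas
  have hpt : ∀ u v : ℝ, u ∈ Icc (0:ℝ) 1 → v ∈ Icc (0:ℝ) 1 →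
      Tendsto (fun n => C n u v) atTop (nhds (C₀ u v)) := by
    intro u v hu hv
    rcases eq_or_lt_of_le hu.1 with hu0 | hu0
    · have he : ∀ n, C n u v = 0 := fun n => hu0 ▸ ((hC n).1.1 v hv).2.1
      have he0 : C₀ u v = 0 := hu0 ▸ (hC₀.1.1 v hv).2.1
      simp only [he, he0]
      exact tendsto_const_nhds
    rcases eq_or_lt_of_le hu.2 with hu1 | hu1
    · have he : ∀ n, C n u v = v := fun n => hu1 ▸ ((hC n).1.1 v hv).2.2.2
      have he0 : C₀ u v = v := hu1 ▸ (hC₀.1.1 v hv).2.2.2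
      simp only [he, he0]
      exact tendsto_const_nhds
    rcases eq_or_lt_of_le hv.1 with hv0 | hv0
    · have he : ∀ n, C n u v = 0 := fun n => hv0 ▸ ((hC n).1.1 u hu).1
      have he0 : C₀ u v = 0 := hv0 ▸ (hC₀.1.1 u hu).1
      simp only [he, he0]
      exact tendsto_const_nhds
    rcases eq_or_lt_of_le hv.2 with hv1 | hv1
    · have he : ∀ n, C n u v = u := fun n => hv1 ▸ ((hC n).1.1 u hu).2.2.1
      have he0 : C₀ u v = u := hv1 ▸ (hC₀.1.1 u hu).2.2.1
      simp only [he, he0]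
      exact tendsto_const_nhds
    -- interior case
    obtain ⟨x, hx⟩ := cdf_surj' (margFst F₀) (fun t => (hmarg₀ t).1) hu0 hu1
    obtain ⟨y, hy⟩ := cdf_surj' (margSnd F₀) (fun t => (hmarg₀ t).2) hv0 hv1
    set a : ℕ → ℝ := fun n => cdf (margFst (F n)) x with ha_def
    set b : ℕ → ℝ := fun n => cdf (margSnd (F n)) y with hb_def
    have ha : Tendsto a atTop (nhds u) := hx ▸ hcdf1 x
    have hb : Tendsto b atTop (nhds v) := hy ▸ hcdf2 y
    have hj := hjoint x y
    have hC0eq : cdf2 F₀ x y = C₀ u v := by rw [hC₀.2 x y, hx, hy]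
    rw [← tendsto_sub_nhds_zero_iff]
    apply squeeze_zero_norm
      (a := fun n => (|u - a n| + |v - b n|) + |cdf2 (F n) x y - cdf2 F₀ x y|)
    · intro n
      have hmem_a : a n ∈ Icc (0:ℝ) 1 := ⟨cdf_nonneg _ _, cdf_le_one _ _⟩
      have hmem_b : b n ∈ Icc (0:ℝ) 1 := ⟨cdf_nonneg _ _, cdf_le_one _ _⟩
      have hSklar : C n (a n) (b n) = cdf2 (F n) x y := ((hC n).2 x y).symm
      have t1 : |C n u v - C n (a n) (b n)| ≤ |u - a n| + |v - b n| :=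
        copula_lip (hC n).1 hmem_a hu hmem_b hv
      have t2 : |C n (a n) (b n) - C₀ u v| = |cdf2 (F n) x y - cdf2 F₀ x y| := by
        rw [hSklar, hC0eq]
      calc ‖C n u v - C₀ u v‖
          = |C n u v - C₀ u v| := rfl
        _ ≤ |C n u v - C n (a n) (b n)| + |C n (a n) (b n) - C₀ u v| := abs_sub_le _ _ _
        _ ≤ (|u - a n| + |v - b n|) + |cdf2 (F n) x y - cdf2 F₀ x y| := by
            rw [← t2]; exact add_le_add_left t1 _
    · have g1 : Tendsto (fun n => |u - a n|) atTop (nhds 0) := by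
        have := ((tendsto_const_nhds (x := u) (f := atTop)).sub ha).abs
        simpa using this
      have g2 : Tendsto (fun n => |v - b n|) atTop (nhds 0) := by
        have := ((tendsto_const_nhds (x := v) (f := atTop)).sub hb).abs
        simpa using this
      have g3 : Tendsto (fun n => |cdf2 (F n) x y - cdf2 F₀ x y|) atTop (nhds 0) := by
        have := (hj.sub (tendsto_const_nhds (x := cdf2 F₀ x y))).abs
        simpa using this
      have := (g1.add g2).add g3
      simpa using this
  -- uniform convergence via a grid and the Lipschitz property
  rw [Metric.tendstoUniformlyOn_iff]
  intro ε hε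
  obtain ⟨N, hN⟩ := exists_nat_gt (8 / ε)
  have hNpos : (0:ℝ) < N := lt_trans (by positivity) hN
  have h1N : 1 / (N:ℝ) < ε / 8 := by
    rw [div_lt_div_iff₀ hNpos (by norm_num)]
    have := (div_lt_iff₀ hε).mp hN
    linarith
  have hgrid : ∀ᶠ n in atTop, ∀ i ∈ Finset.range (N+1), ∀ j ∈ Finset.range (N+1),
      dist (C n ((i:ℝ)/N) ((j:ℝ)/N)) (C₀ ((i:ℝ)/N) ((j:ℝ)/N)) < ε/4 := by
    rw [eventually_all_finset]
    intro i hi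
    rw [eventually_all_finset]
    intro j hj
    have hmi : (i:ℝ)/N ∈ Icc (0:ℝ) 1 := by
      constructor
      · positivity
      · rw [div_le_one hNpos]
        exact_mod_cast Nat.lt_succ_iff.mp (Finset.mem_range.mp hi)
    have hmj : (j:ℝ)/N ∈ Icc (0:ℝ) 1 := by
      constructor
      · positivity
      · rw [div_le_one hNpos]
        exact_mod_cast Nat.lt_succ_iff.mp (Finset.mem_range.mp hj)
    have := (hpt _ _ hmi hmj).eventually (Metric.ball_mem_nhds (C₀ ((i:ℝ)/N) ((j:ℝ)/N))
      (by positivity : (0:ℝ) < ε/4))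
    exact this.mono fun n hn => Metric.mem_ball.mp hn
  filter_upwards [hgrid] with n hn
  rintro ⟨u, v⟩ ⟨hu, hv⟩
  set i : ℕ := ⌊u * N⌋₊ with hi_def
  set j : ℕ := ⌊v * N⌋₊ with hj_def
  have huN : u * N ≤ N := by nlinarith [hu.2]
  have hvN : v * N ≤ N := by nlinarith [hv.2]
  have hiN : i ≤ N := by
    have := Nat.floor_le_floor huN
    rwa [Nat.floor_natCast] at this
  have hjN : j ≤ N := by
    have := Nat.floor_le_floor hvN
    rwa [Nat.floor_natCast] at this
  have hmi : (i:ℝ)/N ∈ Icc (0:ℝ) 1 := ⟨by positivity, by rw [div_le_one hNpos]; exact_mod_cast hiN⟩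
  have hmj : (j:ℝ)/N ∈ Icc (0:ℝ) 1 := ⟨by positivity, by rw [div_le_one hNpos]; exact_mod_cast hjN⟩
  have hui : |u - (i:ℝ)/N| ≤ 1/N := by
    have l1 : (i:ℝ) ≤ u * N := Nat.floor_le (by nlinarith [hu.1])
    have l2 : u * N < (i:ℝ) + 1 := Nat.lt_floor_add_one _
    rw [abs_of_nonneg (by rw [sub_nonneg, div_le_iff₀ hNpos]; linarith)]
    rw [sub_le_iff_le_add, ← add_div, le_div_iff₀ hNpos]
    linarith
  have hvj : |v - (j:ℝ)/N| ≤ 1/N := by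
    have l1 : (j:ℝ) ≤ v * N := Nat.floor_le (by nlinarith [hv.1])
    have l2 : v * N < (j:ℝ) + 1 := Nat.lt_floor_add_one _
    rw [abs_of_nonneg (by rw [sub_nonneg, div_le_iff₀ hNpos]; linarith)]
    rw [sub_le_iff_le_add, ← add_div, le_div_iff₀ hNpos]
    linarith
  have hmid := hn i (Finset.mem_range.mpr (Nat.lt_succ_of_le hiN))
    j (Finset.mem_range.mpr (Nat.lt_succ_of_le hjN))
  have t0 : |C₀ u v - C₀ ((i:ℝ)/N) ((j:ℝ)/N)| ≤ |u - (i:ℝ)/N| + |v - (j:ℝ)/N| :=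
    copula_lip hC₀.1 hmi hu hmj hv
  have tn : |C n ((i:ℝ)/N) ((j:ℝ)/N) - C n u v| ≤ |(i:ℝ)/N - u| + |(j:ℝ)/N - v| :=
    copula_lip (hC n).1 hu hmi hv hmj
  rw [abs_sub_comm ((i:ℝ)/N) u, abs_sub_comm ((j:ℝ)/N) v] at tn
  have hmid' : |C₀ ((i:ℝ)/N) ((j:ℝ)/N) - C n ((i:ℝ)/N) ((j:ℝ)/N)| < ε/4 := by
    rw [← Real.dist_eq, dist_comm]
    exact hmid
  have tri : |C₀ u v - C n u v| ≤
      |C₀ u v - C₀ ((i:ℝ)/N) ((j:ℝ)/N)| + |C₀ ((i:ℝ)/N) ((j:ℝ)/N) - C n ((i:ℝ)/N) ((j:ℝ)/N)|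
      + |C n ((i:ℝ)/N) ((j:ℝ)/N) - C n u v| := by
    calc |C₀ u v - C n u v|
        ≤ |C₀ u v - C n ((i:ℝ)/N) ((j:ℝ)/N)| + |C n ((i:ℝ)/N) ((j:ℝ)/N) - C n u v| :=
          abs_sub_le _ _ _
      _ ≤ _ := add_le_add_left (abs_sub_le _ _ _) _
  rw [Real.dist_eq]
  calc |C₀ u v - C n u v| ≤ _ := tri
    _ < (1/N + 1/N) + ε/4 + (1/N + 1/N) := by
        have := add_le_add (add_le_add (t0.trans (add_le_add hui hvj)) hmid'.le)
          (tn.trans (add_le_add hui hvj))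
        linarith
    _ < ε := by linarith
end
end

section
/- Let (X_1, X_2) be a random vector with continuous margins, square-integrable coordinates, and Var(X_2) > 0. Then the function ρ̃(c,d) = (E[(X_1+c)(X_2+d)])² / (E[(X_1+c)²] E[(X_2+d)²]) on [0,∞)² is not constant. -/
open MeasureTheory ProbabilityTheory Set Filter

noncomputable section

private lemma aux_contra (P Q B B2 : ℝ) (hP : 0 < P) (hB2 : 0 < B2)
    (hvar : 0 < B2 - B ^ 2)
    (cE1 : (Q + P) ^ 2 * B2 = Q ^ 2 * (B2 + 2 * B + 1))
    (cE2 : (Q + 2 * P) ^ 2 * B2 = Q ^ 2 * (B2 + 4 * B + 4)) : False := by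
  have h3 : Q * P * B2 = Q ^ 2 * B := by linear_combination cE1 - (1/4) * cE2
  have h4 : P ^ 2 * B2 = Q ^ 2 := by linear_combination -cE1 + (1/2) * cE2
  by_cases hQ0 : Q = 0
  · have hx := mul_pos (pow_pos hP 2) hB2
    rw [hQ0] at h4
    nlinarith [h4, hx]
  · have h5 : P * B2 = Q * B := mul_left_cancel₀ hQ0 (by linear_combination h3)
    have h6 : P ^ 2 * B2 ^ 2 = P ^ 2 * B2 * B ^ 2 := by
      linear_combination (P * B2 + Q * B) * h5 - B ^ 2 * h4
    nlinarith [h6, mul_pos (mul_pos (pow_pos hP 2) hB2) hvar]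

theorem stmt12 (F : Measure (ℝ × ℝ)) [IsProbabilityMeasure F] (hF : ContinuousMargins F)
    (h1 : Integrable (fun p : ℝ × ℝ => p.1 ^ 2) F)
    (h2 : Integrable (fun p : ℝ × ℝ => p.2 ^ 2) F)
    (hvar : 0 < (∫ p : ℝ × ℝ, p.2 ^ 2 ∂F) - (∫ p : ℝ × ℝ, p.2 ∂F) ^ 2) :
    ¬ ∀ c d c' d' : ℝ, 0 ≤ c → 0 ≤ d → 0 ≤ c' → 0 ≤ d' →
      (∫ p : ℝ × ℝ, (p.1 + c) * (p.2 + d) ∂F) ^ 2 /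
          ((∫ p : ℝ × ℝ, (p.1 + c) ^ 2 ∂F) * (∫ p : ℝ × ℝ, (p.2 + d) ^ 2 ∂F)) =
        (∫ p : ℝ × ℝ, (p.1 + c') * (p.2 + d') ∂F) ^ 2 /
          ((∫ p : ℝ × ℝ, (p.1 + c') ^ 2 ∂F) * (∫ p : ℝ × ℝ, (p.2 + d') ^ 2 ∂F)) := by
  intro h
  have m1 : MemLp (fun p : ℝ × ℝ => p.1) 2 F :=
    (memLp_two_iff_integrable_sq (measurable_fst.aestronglyMeasurable)).mpr h1
  have m2 : MemLp (fun p : ℝ × ℝ => p.2) 2 F :=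
    (memLp_two_iff_integrable_sq (measurable_snd.aestronglyMeasurable)).mpr h2
  have hX1 : Integrable (fun p : ℝ × ℝ => p.1) F := m1.integrable one_le_two
  have hX2 : Integrable (fun p : ℝ × ℝ => p.2) F := m2.integrable one_le_two
  have hXY : Integrable (fun p : ℝ × ℝ => p.1 * p.2) F := by
    have hmul : MemLp ((fun p : ℝ × ℝ => p.1) • (fun p : ℝ × ℝ => p.2)) 1 F :=
      m2.smul m1 (hpqr := ⟨by simp [ENNReal.inv_two_add_inv_two]⟩)
    exact memLp_one_iff_integrable.mp hmul
  set A := ∫ p : ℝ × ℝ, p.1 ∂F with hA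
  set B := ∫ p : ℝ × ℝ, p.2 ∂F with hB
  set A2 := ∫ p : ℝ × ℝ, p.1 ^ 2 ∂F with hA2
  set B2 := ∫ p : ℝ × ℝ, p.2 ^ 2 ∂F with hB2
  set M := ∫ p : ℝ × ℝ, p.1 * p.2 ∂F with hM
  -- expansion of the mixed integral
  have e1 : ∀ c d : ℝ, (∫ p : ℝ × ℝ, (p.1 + c) * (p.2 + d) ∂F)
      = M + d * A + c * B + c * d := by
    intro c d
    have hfun : (fun p : ℝ × ℝ => (p.1 + c) * (p.2 + d))
        = fun p : ℝ × ℝ => p.1 * p.2 + (d * p.1 + (c * p.2 + c * d)) := by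
      funext p; ring
    have i3 : Integrable (fun p : ℝ × ℝ => c * p.2 + c * d) F :=
      (hX2.const_mul c).add (integrable_const _)
    have i4 : Integrable (fun p : ℝ × ℝ => d * p.1 + (c * p.2 + c * d)) F :=
      (hX1.const_mul d).add i3
    rw [hfun, integral_add hXY i4, integral_add (hX1.const_mul d) i3,
      integral_add (hX2.const_mul c) (integrable_const _),
      integral_const_mul, integral_const_mul, integral_const, ← hA, ← hB, ← hM]
    simp [measure_univ]
    ring
  have e2 : ∀ c : ℝ, (∫ p : ℝ × ℝ, (p.1 + c) ^ 2 ∂F) = A2 + 2 * c * A + c ^ 2 := by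
    intro c
    have hfun : (fun p : ℝ × ℝ => (p.1 + c) ^ 2)
        = fun p : ℝ × ℝ => p.1 ^ 2 + ((2 * c) * p.1 + c ^ 2) := by
      funext p; ring
    have i3 : Integrable (fun p : ℝ × ℝ => (2 * c) * p.1 + c ^ 2) F :=
      (hX1.const_mul (2 * c)).add (integrable_const _)
    rw [hfun, integral_add h1 i3, integral_add (hX1.const_mul (2 * c)) (integrable_const _),
      integral_const_mul, integral_const, ← hA, ← hA2]
    simp [measure_univ]
    ring
  have e3 : ∀ d : ℝ, (∫ p : ℝ × ℝ, (p.2 + d) ^ 2 ∂F) = B2 + 2 * d * B + d ^ 2 := by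
    intro d
    have hfun : (fun p : ℝ × ℝ => (p.2 + d) ^ 2)
        = fun p : ℝ × ℝ => p.2 ^ 2 + ((2 * d) * p.2 + d ^ 2) := by
      funext p; ring
    have i3 : Integrable (fun p : ℝ × ℝ => (2 * d) * p.2 + d ^ 2) F :=
      (hX2.const_mul (2 * d)).add (integrable_const _)
    rw [hfun, integral_add h2 i3, integral_add (hX2.const_mul (2 * d)) (integrable_const _),
      integral_const_mul, integral_const, ← hB, ← hB2]
    simp [measure_univ]
    ring
  clear_value A B A2 B2 M
  -- Var(X₁) ≥ 0
  have hvar1 : 0 ≤ A2 - A ^ 2 := by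
    have h0 : 0 ≤ ∫ p : ℝ × ℝ, (p.1 + (-A)) ^ 2 ∂F :=
      integral_nonneg fun p => sq_nonneg _
    rw [e2 (-A)] at h0
    nlinarith [h0]
  have hB2pos : (0:ℝ) < B2 := by nlinarith [sq_nonneg B]
  -- choose c
  have hc0 : (0:ℝ) ≤ |A| + 1 := by positivity
  set c : ℝ := |A| + 1 with hc
  have hPpos : (0:ℝ) < A + c := by
    have h1' := neg_abs_le A
    rw [hc]; linarith
  clear_value c
  have hDc : (0:ℝ) < A2 + 2 * c * A + c ^ 2 := by nlinarith [hvar1, hPpos]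
  have hD : ∀ d : ℝ, (0:ℝ) < B2 + 2 * d * B + d ^ 2 := by
    intro d; nlinarith [sq_nonneg (d + B), hvar]
  have hd0 := hD 0
  have hd1 := hD 1
  have hd2 := hD 2
  -- instantiate at (c,1) vs (c,0) and (c,2) vs (c,0)
  have heq1 := h c 1 c 0 hc0 zero_le_one hc0 le_rfl
  have heq2 := h c 2 c 0 hc0 zero_le_two hc0 le_rfl
  rw [e1 c 1, e1 c 0, e2 c, e3 1, e3 0] at heq1
  rw [e1 c 2, e1 c 0, e2 c, e3 2, e3 0] at heq2
  set Dc := A2 + 2 * c * A + c ^ 2 with hDcdef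
  clear_value Dc
  have eqd1 : (M + 1 * A + c * B + c * 1) ^ 2 * (Dc * (B2 + 2 * 0 * B + 0 ^ 2))
      = (M + 0 * A + c * B + c * 0) ^ 2 * (Dc * (B2 + 2 * 1 * B + 1 ^ 2)) :=
    (div_eq_div_iff (mul_pos hDc hd1).ne' (mul_pos hDc hd0).ne').mp heq1
  have eqd2 : (M + 2 * A + c * B + c * 2) ^ 2 * (Dc * (B2 + 2 * 0 * B + 0 ^ 2))
      = (M + 0 * A + c * B + c * 0) ^ 2 * (Dc * (B2 + 2 * 2 * B + 2 ^ 2)) :=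
    (div_eq_div_iff (mul_pos hDc hd2).ne' (mul_pos hDc hd0).ne').mp heq2
  have cE1 : ((M + c * B) + (A + c)) ^ 2 * B2 = (M + c * B) ^ 2 * (B2 + 2 * B + 1) :=
    mul_left_cancel₀ (ne_of_gt hDc) (by linear_combination eqd1)
  have cE2 : ((M + c * B) + 2 * (A + c)) ^ 2 * B2 = (M + c * B) ^ 2 * (B2 + 4 * B + 4) :=
    mul_left_cancel₀ (ne_of_gt hDc) (by linear_combination eqd2)
  exact aux_contra (A + c) (M + c * B) B B2 hPpos hB2pos hvar cE1 cE2
end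
end
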